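/- If p, q are positive integers, then p/q occurs in the sequence: there exists n ≥ 1 with a(n) = p/q. (Proof by strong induction on p + q.) -/

import Mathlib

theorem stmt6 (a : ℕ → ℚ) (h1 : a 1 = 1)
    (h2 : ∀ n : ℕ, 1 ≤ n → a (2 * n) = a n + 1)
    (h3 : ∀ n : ℕ, 1 ≤ n → a (2 * n + 1) = 1 / a (2 * n)) :
    ∀ p q : ℕ, 1 ≤ p → 1 ≤ q → ∃ n : ℕ, 1 ≤ n ∧ a n = (p : ℚ) / (q : ℚ) := by
  have key : ∀ k p q : ℕ, p + q ≤ k → 1 ≤ p → 1 ≤ q →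
      ∃ n : ℕ, 1 ≤ n ∧ a n = (p : ℚ) / (q : ℚ) := by
    intro k
    induction k with
    | zero => intro p q h hp hq; omega
    | succ k ih =>
      intro p q h hp hq
      have hp0 : (p : ℚ) ≠ 0 := Nat.cast_ne_zero.mpr (by omega)
      have hq0 : (q : ℚ) ≠ 0 := Nat.cast_ne_zero.mpr (by omega)
      rcases lt_trichotomy p q with hlt | heq | hgt
      · obtain ⟨n, hn, han⟩ := ih (q - p) p (by omega) (by omega) hp
        refine ⟨2 * n + 1, by omega, ?_⟩
        rw [h3 n hn, h2 n hn, han]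
        have hc : ((q - p : ℕ) : ℚ) = (q : ℚ) - p := by
          push_cast [Nat.cast_sub hlt.le]; ring
        rw [hc]
        field_simp
        simp [hq0]
      · subst heq
        exact ⟨1, le_refl 1, by rw [h1]; field_simp⟩
      · obtain ⟨n, hn, han⟩ := ih (p - q) q (by omega) (by omega) hq
        refine ⟨2 * n, by omega, ?_⟩
        rw [h2 n hn, han]
        have hc : ((p - q : ℕ) : ℚ) = (p : ℚ) - q := by
          push_cast [Nat.cast_sub hgt.le]; ring
        rw [hc]
        field_simp
        ring
  intro p q hp hq
  exact key (p + q) p q le_rfl hp hq
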